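/- For 0 < t < 1/2, the series Σ_{k=1}^∞ |sin(kπt)/(kπt)|^2 equals (1 - t)/(2t), equivalently 1 + 2Σ_{k=1}^∞ (sin(kπt)/(kπt))^2 = 1/t. -/

import Mathlib

open Real

lemma bern2_eval (x : ℝ) :
    (Polynomial.map (algebraMap ℚ ℝ) (Polynomial.bernoulli 2)).eval x = x^2 - x + 1/6 := by
  have h2 : bernoulli 2 = 1/6 := by
    rw [bernoulli, bernoulli'_two]; norm_num
  simp [Polynomial.bernoulli_def, Finset.sum_range_succ, bernoulli_zero, bernoulli_one, h2]
  ring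

lemma bern2_aeval (x : ℝ) :
    (Polynomial.aeval x) (Polynomial.bernoulli 2) = x^2 - x + 1/6 := by
  rw [Polynomial.aeval_def, ← Polynomial.eval_map, bern2_eval]

lemma key (t : ℝ) (ht0 : 0 < t) (ht : t < 1 / 2) :
    HasSum (fun k : ℕ => (Real.sin ((k + 1) * Real.pi * t) / ((k + 1) * Real.pi * t)) ^ 2)
      ((1 - t) / (2 * t)) := by
  have hπ := Real.pi_pos
  have hx : t ∈ Set.Icc (0:ℝ) 1 := ⟨ht0.le, by linarith⟩
  have h0 : (0:ℝ) ∈ Set.Icc (0:ℝ) 1 := ⟨le_refl _, zero_le_one⟩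
  have hc := hasSum_one_div_nat_pow_mul_cos one_ne_zero hx
  have hz := hasSum_one_div_nat_pow_mul_cos one_ne_zero h0
  norm_num [bern2_aeval] at hc hz
  have hsub := (hz.sub hc).mul_left (1 / (2 * π ^ 2 * t ^ 2))
  set F : ℕ → ℝ := fun n => 1 / (2 * π ^ 2 * t ^ 2) *
      (((n:ℝ) ^ 2)⁻¹ - ((n:ℝ) ^ 2)⁻¹ * Real.cos (2 * π * n * t)) with hF
  have hshift : HasSum (fun k : ℕ => F (k + 1)) ((1 - t) / (2 * t)) := by
    rw [hasSum_nat_add_iff 1]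
    have hF0 : ∑ i ∈ Finset.range 1, F i = 0 := by simp [hF]
    rw [hF0, add_zero]
    convert hsub using 1
    · rfl
    field_simp
    ring
  have heq : (fun k : ℕ => F (k + 1)) =
      (fun k : ℕ => (Real.sin ((k + 1) * π * t) / ((k + 1) * π * t)) ^ 2) := by
    funext k
    have hd : ((k:ℝ) + 1) * π * t ≠ 0 := by positivity
    have h2 : 2 * π * ((k:ℝ) + 1) * t = 2 * (((k:ℝ) + 1) * π * t) := by ring
    simp only [hF]
    push_cast
    rw [h2, Real.cos_two_mul, div_pow, Real.sin_sq]
    field_simp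
    ring
  rwa [heq] at hshift

theorem sum_sinc_sq (t : ℝ) (ht0 : 0 < t) (ht : t < 1 / 2) :
    (∑' k : ℕ, (Real.sin ((k + 1) * Real.pi * t) / ((k + 1) * Real.pi * t)) ^ 2)
        = (1 - t) / (2 * t) ∧
    1 + 2 * ∑' k : ℕ, (Real.sin ((k + 1) * Real.pi * t) / ((k + 1) * Real.pi * t)) ^ 2
        = 1 / t := by
  have h := (key t ht0 ht).tsum_eq
  refine ⟨h, ?_⟩
  rw [h]
  field_simp
  ring
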